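/- arXiv:2011.10161 — 2 statements merged into one kernel-verified Lean document; each statement's English description precedes it below -/
import Mathlib

section
/- Let n be a positive integer, γ ∈ [0,1), κ ∈ (0,1), and χ a real number. Let s be a positive integer and let 0 = α̃_1 < b̃_1 < α̃_2 < b̃_2 < … < α̃_s < b̃_s be real numbers with Σ_{i=1}^{s}(b̃_i − α̃_i) = 1. Let I be a finite index set with |I| ≤ n, and let c_i > 0 be a real number for each i ∈ I. For t ∈ ℂ with t ∉ {b̃_1,…,b̃_s}, define Φ_s(t) = Π_{i=1}^{s} (t − α̃_i)/(t − b̃_i). Then the set of non-real complex numbers t (i.e. with nonzero imaginary part) such that t ∉ {b̃_1,…,b̃_s}, Φ_s(t) ≠ 1, Φ_s(t) ≠ −c_i for all i ∈ I, and t − κ·Φ_s(t)/(Φ_s(t) − 1) + (κ/(n(1−γ))) · Σ_{i∈I} Φ_s(t)/(Φ_s(t) + c_i) = (χ − γ(1−κ))/(1−γ), has cardinality at most 2. In particular, this system of equations has at most one pair of complex conjugate non-real roots. -/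
open Finset Complex Metric Set Filter Topology

/-- argument of a point in the open upper half plane lies in (0, π). -/
lemma arg_mem_Ioo_of_im_pos {z : ℂ} (hz : 0 < z.im) :
    Complex.arg z ∈ Set.Ioo 0 Real.pi := by
  have hz0 : z ≠ 0 := fun h => by simp [h] at hz
  have hsin : 0 < Real.sin (Complex.arg z) := by
    rw [Complex.sin_arg]
    exact div_pos hz (norm_pos_iff.mpr hz0)
  constructor
  · by_contra h
    push_neg at h
    have := Real.sin_nonpos_of_nonpos_of_neg_pi_le h (Complex.neg_pi_lt_arg z).le
    linarith
  · exact Complex.arg_lt_pi_iff.mpr (Or.inr (by linarith))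

lemma div_sqrt_strictMono {y r₁ r₂ : ℝ} (hy : 0 < y) (h : r₂ < r₁) :
    r₂ / Real.sqrt (r₂ ^ 2 + y ^ 2) < r₁ / Real.sqrt (r₁ ^ 2 + y ^ 2) := by
  have h₁ : 0 < Real.sqrt (r₁ ^ 2 + y ^ 2) := Real.sqrt_pos.mpr (by positivity)
  have h₂ : 0 < Real.sqrt (r₂ ^ 2 + y ^ 2) := Real.sqrt_pos.mpr (by positivity)
  have e₁ : Real.sqrt (r₁ ^ 2 + y ^ 2) ^ 2 = r₁ ^ 2 + y ^ 2 := Real.sq_sqrt (by positivity)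
  have e₂ : Real.sqrt (r₂ ^ 2 + y ^ 2) ^ 2 = r₂ ^ 2 + y ^ 2 := Real.sq_sqrt (by positivity)
  set s₁ := Real.sqrt (r₁ ^ 2 + y ^ 2)
  set s₂ := Real.sqrt (r₂ ^ 2 + y ^ 2)
  rw [div_lt_div_iff₀ h₂ h₁]
  rcases le_or_gt 0 r₂ with h0 | h0
  · have hr₁ : 0 < r₁ := lt_of_le_of_lt h0 h
    have E1 : (r₂ * s₁) ^ 2 = r₂ ^ 2 * r₁ ^ 2 + r₂ ^ 2 * y ^ 2 := by rw [mul_pow, e₁]; ring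
    have E2 : (r₁ * s₂) ^ 2 = r₂ ^ 2 * r₁ ^ 2 + r₁ ^ 2 * y ^ 2 := by rw [mul_pow, e₂]; ring
    have key : r₂ ^ 2 * y ^ 2 < r₁ ^ 2 * y ^ 2 := by
      nlinarith [mul_pos (mul_pos hy hy) (mul_pos (sub_pos.mpr h) (show (0:ℝ) < r₁ + r₂ by linarith))]
    have hsq : (r₂ * s₁) ^ 2 < (r₁ * s₂) ^ 2 := by rw [E1, E2]; linarith
    exact lt_of_pow_lt_pow_left₀ 2 (by positivity) hsq
  · rcases le_or_gt 0 r₁ with h1 | h1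
    · have hL : r₂ * s₁ < 0 := mul_neg_of_neg_of_pos h0 h₁
      have hR : 0 ≤ r₁ * s₂ := by positivity
      linarith
    · have E1 : (-(r₂ * s₁)) ^ 2 = r₂ ^ 2 * r₁ ^ 2 + r₂ ^ 2 * y ^ 2 := by
        rw [neg_pow, mul_pow, e₁]; ring
      have E2 : (-(r₁ * s₂)) ^ 2 = r₂ ^ 2 * r₁ ^ 2 + r₁ ^ 2 * y ^ 2 := by
        rw [neg_pow, mul_pow, e₂]; ring
      have key : r₁ ^ 2 * y ^ 2 < r₂ ^ 2 * y ^ 2 := by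
        nlinarith [mul_pos (mul_pos hy hy) (mul_pos (sub_pos.mpr h) (show (0:ℝ) < -(r₁ + r₂) by linarith))]
      have hsq : (-(r₁ * s₂)) ^ 2 < (-(r₂ * s₁)) ^ 2 := by rw [E1, E2]; linarith
      have := lt_of_pow_lt_pow_left₀ 2 (by nlinarith : (0:ℝ) ≤ -(r₂ * s₁)) hsq
      linarith

/-- for `t` in the upper half plane, `x ↦ arg (t - x)` is strictly increasing. -/
lemma arg_sub_lt_arg_sub {t : ℂ} (ht : 0 < t.im) {x₁ x₂ : ℝ} (h : x₁ < x₂) :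
    Complex.arg (t - x₁) < Complex.arg (t - x₂) := by
  have him : ∀ x : ℝ, (t - (x:ℂ)).im = t.im := by intro x; simp
  have hne : ∀ x : ℝ, t - (x:ℂ) ≠ 0 := by
    intro x hx
    have := him x
    rw [hx] at this
    simp at this
    linarith
  have habs : ∀ x : ℝ, ‖t - x‖ = Real.sqrt ((t.re - x) ^ 2 + t.im ^ 2) := by
    intro x
    rw [Complex.norm_def, Complex.normSq_apply]
    congr 1
    simp [him]
    ring
  have hmem₁ := arg_mem_Ioo_of_im_pos (by rw [him x₁]; exact ht)
  have hmem₂ := arg_mem_Ioo_of_im_pos (by rw [him x₂]; exact ht)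
  have hcos : Real.cos (Complex.arg (t - x₂)) < Real.cos (Complex.arg (t - x₁)) := by
    rw [Complex.cos_arg (hne x₁), Complex.cos_arg (hne x₂), habs, habs]
    have hre : ∀ x : ℝ, (t - (x:ℂ)).re = t.re - x := by intro x; simp
    rw [hre, hre]
    exact div_sqrt_strictMono ht (by linarith)
  by_contra hcon
  push_neg at hcon
  rcases eq_or_lt_of_le hcon with heq | hlt
  · rw [heq] at hcos; linarith
  · have := Real.strictAntiOn_cos
      (Set.mem_Icc.mpr ⟨hmem₂.1.le, hmem₂.2.le⟩)
      (Set.mem_Icc.mpr ⟨hmem₁.1.le, hmem₁.2.le⟩) hlt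
    linarith

lemma im_phi_neg {t : ℂ} (ht : 0 < t.im) {s : ℕ} (hs : 0 < s) {a b : ℕ → ℝ}
    (hab : ∀ i, 1 ≤ i → i ≤ s → a i < b i)
    (hba : ∀ i, 1 ≤ i → i < s → b i < a (i + 1)) :
    (∏ i ∈ Finset.Icc 1 s, (t - (a i : ℂ)) / (t - (b i : ℂ))).im < 0 := by
  have hne : ∀ x : ℝ, t - (x:ℂ) ≠ 0 := by
    intro x hx
    have : (t - (x:ℂ)).im = t.im := by simp
    rw [hx] at this
    simp at this
    linarith
  set θ : ℝ → ℝ := fun x => Complex.arg (t - x) with hθdef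
  have hθmono : ∀ x₁ x₂ : ℝ, x₁ < x₂ → θ x₁ < θ x₂ := fun x₁ x₂ h =>
    arg_sub_lt_arg_sub ht h
  have hθIoo : ∀ x : ℝ, θ x ∈ Set.Ioo 0 Real.pi := fun x =>
    arg_mem_Ioo_of_im_pos (by simp [ht] : (0:ℝ) < (t - (x:ℂ)).im)
  have hfac : ∀ x z : ℝ, (t - (x:ℂ)) / (t - (z:ℂ))
      = ((‖t - x‖ / ‖t - z‖ : ℝ) : ℂ)
        * Complex.exp (((θ x - θ z : ℝ) : ℂ) * Complex.I) := by
    intro x z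
    conv_lhs => rw [← Complex.norm_mul_exp_arg_mul_I (t - x),
      ← Complex.norm_mul_exp_arg_mul_I (t - z)]
    rw [mul_div_mul_comm, ← Complex.exp_sub, Complex.ofReal_div]
    congr 2
    push_cast
    ring
  have hprod : (∏ i ∈ Finset.Icc 1 s, (t - (a i : ℂ)) / (t - (b i : ℂ)))
      = ((∏ i ∈ Finset.Icc 1 s, ‖t - a i‖ / ‖t - b i‖ : ℝ) : ℂ)
        * Complex.exp (((∑ i ∈ Finset.Icc 1 s, (θ (a i) - θ (b i)) : ℝ) : ℂ) * Complex.I) := by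
    rw [Finset.prod_congr rfl (fun i _ => hfac (a i) (b i)), Finset.prod_mul_distrib,
      Complex.ofReal_prod, ← Complex.exp_sum, Complex.ofReal_sum, Finset.sum_mul]
  set ψ : ℝ := ∑ i ∈ Finset.Icc 1 s, (θ (a i) - θ (b i)) with hψdef
  have hR : 0 < ∏ i ∈ Finset.Icc 1 s, ‖t - a i‖ / ‖t - b i‖ :=
    Finset.prod_pos fun i _ => div_pos (norm_pos_iff.mpr (hne (a i))) (norm_pos_iff.mpr (hne (b i)))
  have hψneg : ψ < 0 := by
    have h0 : (0:ℝ) = ∑ i ∈ Finset.Icc 1 s, (0:ℝ) := by simp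
    rw [hψdef, h0]
    refine Finset.sum_lt_sum_of_nonempty (Finset.nonempty_Icc.mpr hs) fun i hi => ?_
    rw [Finset.mem_Icc] at hi
    have := hθmono (a i) (b i) (hab i hi.1 hi.2)
    linarith
  have htele : ∀ m, 1 ≤ m → m ≤ s →
      (∑ i ∈ Finset.Icc 1 m, (θ (b i) - θ (a i))) ≤ θ (b m) - θ (a 1) := by
    intro m hm
    induction m, hm using Nat.le_induction with
    | base => intro _; simp
    | succ m hm ih =>
      intro hms
      have ih' := ih (by omega)
      rw [Finset.sum_Icc_succ_top (by omega : 1 ≤ m + 1)]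
      have h1 : θ (b m) < θ (a (m + 1)) := hθmono _ _ (hba m hm (by omega))
      linarith
  have hψgt : -Real.pi < ψ := by
    have hsum : ψ = -∑ i ∈ Finset.Icc 1 s, (θ (b i) - θ (a i)) := by
      rw [hψdef, ← Finset.sum_neg_distrib]
      exact Finset.sum_congr rfl fun i _ => by ring
    have h1 := htele s hs le_rfl
    have h2 := (hθIoo (b s)).2
    have h3 := (hθIoo (a 1)).1
    rw [hsum]
    linarith
  rw [hprod, Complex.im_ofReal_mul, Complex.exp_ofReal_mul_I_im]
  exact mul_neg_of_pos_of_neg hR (Real.sin_neg_of_neg_of_neg_pi_lt hψneg hψgt)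

/-- A holomorphic self-map of the upper half plane with two distinct fixed points
is the identity. -/
lemma eq_id_of_two_fixed_points {T : ℂ → ℂ}
    (hd : DifferentiableOn ℂ T {z : ℂ | 0 < z.im})
    (hm : Set.MapsTo T {z : ℂ | 0 < z.im} {z : ℂ | 0 < z.im})
    {t₁ t₂ : ℂ} (h₁ : 0 < t₁.im) (h₂ : 0 < t₂.im)
    (f₁ : T t₁ = t₁) (f₂ : T t₂ = t₂) (hne : t₁ ≠ t₂) :
    ∀ z : ℂ, 0 < z.im → T z = z := by
  set U : Set ℂ := {z : ℂ | 0 < z.im} with hU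
  set σ : ℂ := (starRingEnd ℂ) t₁ with hσ
  have hσim : σ.im = -t₁.im := Complex.conj_im t₁
  have hσre : σ.re = t₁.re := Complex.conj_re t₁
  set c : ℂ → ℂ := fun z => (z - t₁) / (z - σ) with hc
  set ψ : ℂ → ℂ := fun w => (σ * w - t₁) / (w - 1) with hψ
  -- basic nonvanishing
  have hzσ : ∀ z ∈ U, z - σ ≠ 0 := by
    intro z hz h
    have := congrArg Complex.im h
    simp only [Complex.sub_im, hσim, Complex.zero_im] at this
    have hzim : 0 < z.im := hz
    linarith
  -- c maps U into the unit ball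
  have hcball : ∀ z ∈ U, c z ∈ ball (0:ℂ) 1 := by
    intro z hz
    have hzim : 0 < z.im := hz
    have hnq : Complex.normSq (z - t₁) < Complex.normSq (z - σ) := by
      simp only [Complex.normSq_apply, Complex.sub_re, Complex.sub_im, hσre, hσim]
      nlinarith [mul_pos hzim h₁]
    have hlt : ‖z - t₁‖ < ‖z - σ‖ := by
      rw [Complex.norm_def, Complex.norm_def]
      exact Real.sqrt_lt_sqrt (Complex.normSq_nonneg _) hnq
    rw [mem_ball_zero_iff, hc]
    simp only [norm_div]
    rw [div_lt_one (norm_pos_iff.mpr (hzσ z hz))]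
    exact hlt
  -- ψ maps the unit ball into U
  have hψU : ∀ w ∈ ball (0:ℂ) 1, ψ w ∈ U := by
    intro w hw
    rw [mem_ball_zero_iff] at hw
    have hw1 : w - 1 ≠ 0 := by
      intro h
      have : w = 1 := by linear_combination h
      rw [this] at hw; norm_num at hw
    have hnq : Complex.normSq w < 1 := by
      rw [← Complex.sq_norm]
      have habs : ‖w‖ < 1 := hw
      nlinarith [norm_nonneg w, habs]
    have hnqpos : 0 < Complex.normSq (w - 1) := Complex.normSq_pos.mpr hw1
    show 0 < (ψ w).im
    rw [hψ]
    simp only []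
    rw [Complex.div_im, div_sub_div_same]
    apply div_pos
    · simp only [Complex.sub_im, Complex.sub_re, Complex.mul_im, Complex.mul_re,
        hσre, hσim, Complex.one_re, Complex.one_im]
      rw [Complex.normSq_apply] at hnq
      nlinarith [h₁, hnq]
    · exact hnqpos
  -- ψ inverts c on U
  have hψc : ∀ z ∈ U, ψ (c z) = z := by
    intro z hz
    have hz0 : z - σ ≠ 0 := hzσ z hz
    have hcz1 : c z - 1 ≠ 0 := by
      intro h
      have h1 : c z = 1 := by linear_combination h
      have := hcball z hz
      rw [mem_ball_zero_iff, h1] at this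
      norm_num at this
    rw [hψ]
    simp only []
    rw [div_eq_iff hcz1]
    rw [hc]
    field_simp
    ring
  -- values of ψ, c at the special points
  have hψ0 : ψ 0 = t₁ := by rw [hψ]; simp
  have hct₁ : c t₁ = 0 := by rw [hc]; simp
  have hct₂ : c t₂ ∈ ball (0:ℂ) 1 := hcball t₂ h₂
  have hct₂0 : c t₂ ≠ 0 := by
    intro h
    rw [hc] at h
    simp only [div_eq_zero_iff] at h
    rcases h with h | h
    · exact hne (show t₁ = t₂ by linear_combination -h)
    · exact hzσ t₂ h₂ h
  -- the conjugated map g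
  set g : ℂ → ℂ := fun w => c (T (ψ w)) with hg
  have hg0 : g 0 = 0 := by rw [hg]; simp only []; rw [hψ0, f₁, hct₁]
  have hgz₂ : g (c t₂) = c t₂ := by
    rw [hg]; simp only []; rw [hψc t₂ h₂, f₂]
  -- differentiability of g on the ball
  have hψdiff : DifferentiableOn ℂ ψ (ball (0:ℂ) 1) := by
    apply DifferentiableOn.div
    · exact ((differentiable_id.const_mul σ).sub_const t₁).differentiableOn
    · exact (differentiable_id.sub_const 1).differentiableOn
    · intro w hw
      rw [mem_ball_zero_iff] at hw
      intro h
      have : w = 1 := by linear_combination h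
      rw [this] at hw; norm_num at hw
  have hcdiff : DifferentiableOn ℂ c U := by
    apply DifferentiableOn.div
    · exact (differentiable_id.sub_const t₁).differentiableOn
    · exact (differentiable_id.sub_const σ).differentiableOn
    · exact hzσ
  have hgdiff : DifferentiableOn ℂ g (ball (0:ℂ) 1) := by
    apply DifferentiableOn.comp (t := U) hcdiff
    · exact DifferentiableOn.comp (t := U) hd hψdiff hψU
    · intro w hw
      exact hm (hψU w hw)
  have hgmaps : Set.MapsTo g (ball (0:ℂ) 1) (ball (g 0) 1) := by
    rw [hg0]
    intro w hw
    exact hcball _ (hm (hψU w hw))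
  -- Schwarz lemma, equality case
  have hdsl : dslope g 0 (c t₂) = 1 := by
    rw [dslope_of_ne g hct₂0, slope_def_field, hgz₂, hg0]
    simpa using div_self hct₂0
  have heq := Complex.affine_of_mapsTo_ball_of_exists_norm_dslope_eq_div
    hgdiff (hgmaps.mono_right ball_subset_closedBall) hct₂ (by rw [hdsl]; norm_num)
  -- conclude g = id on ball
  have hgid : ∀ w ∈ ball (0:ℂ) 1, g w = w := by
    intro w hw
    have := heq hw
    rw [hdsl, hg0] at this
    simpa using this
  -- conclude T = id on U
  intro z hz
  have hzU : z ∈ U := hz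
  have h3 := hgid (c z) (hcball z hzU)
  rw [hg] at h3
  simp only [] at h3
  rw [hψc z hzU] at h3
  have hTz : T z ∈ U := hm hzU
  calc T z = ψ (c (T z)) := (hψc _ hTz).symm
    _ = ψ (c z) := by rw [h3]
    _ = z := hψc z hzU

lemma tendsto_inv_coe : Tendsto (fun y : ℝ => ((y : ℂ))⁻¹) atTop (𝓝 0) := by
  have h : Tendsto (fun y : ℝ => ((y⁻¹ : ℝ) : ℂ)) atTop (𝓝 ((0:ℝ):ℂ)) :=
    (Complex.continuous_ofReal.tendsto _).comp tendsto_inv_atTop_zero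
  simpa [Complex.ofReal_inv] using h

lemma tendsto_ratio (p q : ℝ) :
    Tendsto (fun y : ℝ => (Complex.I * y - p) / (Complex.I * y - q)) atTop (𝓝 1) := by
  have h1 : Tendsto (fun y : ℝ => Complex.I - (p:ℂ) * ((y:ℂ))⁻¹) atTop
      (𝓝 (Complex.I - (p:ℂ) * 0)) := tendsto_const_nhds.sub (tendsto_const_nhds.mul tendsto_inv_coe)
  have h2 : Tendsto (fun y : ℝ => Complex.I - (q:ℂ) * ((y:ℂ))⁻¹) atTop
      (𝓝 (Complex.I - (q:ℂ) * 0)) := tendsto_const_nhds.sub (tendsto_const_nhds.mul tendsto_inv_coe)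
  have h3 := h1.div h2 (by simp [Complex.I_ne_zero])
  have h4 : (Complex.I - (p:ℂ) * 0) / (Complex.I - (q:ℂ) * 0) = 1 := by
    simp [Complex.I_ne_zero]
  rw [h4] at h3
  refine h3.congr' ?_
  filter_upwards [eventually_ge_atTop (1:ℝ)] with y hy
  have hy0 : (y:ℂ) ≠ 0 := by
    simp only [ne_eq, Complex.ofReal_eq_zero]
    linarith
  simp only [Pi.div_apply]
  rw [show Complex.I - (p:ℂ) * ((y:ℂ))⁻¹ = (Complex.I * y - p) * ((y:ℂ))⁻¹ by
      field_simp,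
    show Complex.I - (q:ℂ) * ((y:ℂ))⁻¹ = (Complex.I * y - q) * ((y:ℂ))⁻¹ by
      field_simp,
    mul_div_mul_right _ _ (inv_ne_zero hy0)]

lemma tendsto_mul_sub_ratio (p q : ℝ) :
    Tendsto (fun y : ℝ => (Complex.I * y) * ((Complex.I * y - p) / (Complex.I * y - q) - 1))
      atTop (𝓝 ((q:ℂ) - p)) := by
  have h0 : Tendsto (fun y : ℝ => ((q:ℂ) - p) * ((Complex.I * y - 0) / (Complex.I * y - q)))
      atTop (𝓝 (((q:ℂ) - p) * 1)) := tendsto_const_nhds.mul (tendsto_ratio 0 q)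
  rw [mul_one] at h0
  refine h0.congr' ?_
  filter_upwards [eventually_ge_atTop (1:ℝ)] with y hy
  have hden : Complex.I * y - q ≠ 0 := by
    intro h
    have := congrArg Complex.im h
    simp at this
    linarith
  field_simp
  ring

lemma tendsto_mul_prod_sub (J : Finset ℕ) (f : ℕ → ℝ → ℂ) (d : ℕ → ℂ)
    (h1 : ∀ i ∈ J, Tendsto (f i) atTop (𝓝 1))
    (h2 : ∀ i ∈ J, Tendsto (fun y => (Complex.I * y) * (f i y - 1)) atTop (𝓝 (d i))) :
    Tendsto (fun y : ℝ => (Complex.I * y) * ((∏ i ∈ J, f i y) - 1)) atTop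
      (𝓝 (∑ i ∈ J, d i)) := by
  induction J using Finset.cons_induction with
  | empty =>
    have : Tendsto (fun _ : ℝ => (0:ℂ)) atTop (𝓝 0) := tendsto_const_nhds
    simpa using this
  | cons a J ha IH =>
    have hP : Tendsto (fun y => ∏ i ∈ J, f i y) atTop (𝓝 1) := by
      have := tendsto_finset_prod (f := fun i y => f i y) (a := fun _ => (1:ℂ)) J
        (fun i hi => h1 i (Finset.mem_cons_of_mem hi))
      simpa using this
    have key : Tendsto
        (fun y : ℝ => ((Complex.I * y) * (f a y - 1)) * (∏ i ∈ J, f i y)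
          + (Complex.I * y) * ((∏ i ∈ J, f i y) - 1)) atTop
        (𝓝 (d a * 1 + ∑ i ∈ J, d i)) :=
      ((h2 a (Finset.mem_cons_self a J)).mul hP).add
        (IH (fun i hi => h1 i (Finset.mem_cons_of_mem hi))
            (fun i hi => h2 i (Finset.mem_cons_of_mem hi)))
    rw [mul_one] at key
    rw [Finset.sum_cons]
    refine key.congr fun y => ?_
    rw [Finset.prod_cons]
    ring

/-- Proposition 3.8 of the paper (root count): with a piecewise bottom boundary
condition encoded by `0 = α̃_1 < b̃_1 < … < α̃_s < b̃_s`, `Σ(b̃_i − α̃_i) = 1`,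
positive weights `c_i` for `i` in a finite index set `I` with `|I| ≤ n`,
`γ ∈ [0,1)`, `κ ∈ (0,1)` and `χ ∈ ℝ`, the system of equations
`Φ_s(t) ≠ 1`, `Φ_s(t) ≠ −c_i`, and
`t − κΦ_s(t)/(Φ_s(t)−1) + (κ/(n(1−γ)))·Σ_{i∈I} Φ_s(t)/(Φ_s(t)+c_i)
  = (χ − γ(1−κ))/(1−γ)`
has at most one pair of complex conjugate non-real roots `t`: the set of
non-real solutions has at most two elements. -/
theorem at_most_one_pair_of_nonreal_roots
    (n : ℕ) (hn : 0 < n) (γ : ℝ) (hγ0 : 0 ≤ γ) (hγ1 : γ < 1)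
    (κ : ℝ) (hκ : κ ∈ Set.Ioo (0 : ℝ) 1) (χ : ℝ)
    (s : ℕ) (hs : 0 < s) (a b : ℕ → ℝ)
    (ha1 : a 1 = 0)
    (hab : ∀ i, 1 ≤ i → i ≤ s → a i < b i)
    (hba : ∀ i, 1 ≤ i → i < s → b i < a (i + 1))
    (hsum : ∑ i ∈ Finset.Icc 1 s, (b i - a i) = 1)
    (I : Finset ℕ) (hI : I.card ≤ n)
    (c : ℕ → ℝ) (hc : ∀ i ∈ I, 0 < c i)
    (Φ : ℂ → ℂ)
    (hΦ : ∀ t : ℂ, Φ t = ∏ i ∈ Finset.Icc 1 s, (t - (a i : ℂ)) / (t - (b i : ℂ))) :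
    Set.encard {t : ℂ | t.im ≠ 0 ∧ (∀ i ∈ Finset.Icc 1 s, t ≠ (b i : ℂ)) ∧
      Φ t ≠ 1 ∧ (∀ i ∈ I, Φ t ≠ -(c i : ℂ)) ∧
      t - (κ : ℂ) * Φ t / (Φ t - 1)
          + ((κ : ℂ) / ((n : ℂ) * (1 - (γ : ℂ)))) * ∑ i ∈ I, Φ t / (Φ t + (c i : ℂ))
        = ((χ : ℂ) - (γ : ℂ) * (1 - (κ : ℂ))) / (1 - (γ : ℂ))} ≤ 2 := by
  obtain ⟨hκ0, hκ1⟩ := hκ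
  have hγ' : (0:ℝ) < 1 - γ := by linarith
  set S : Set ℂ := {t : ℂ | t.im ≠ 0 ∧ (∀ i ∈ Finset.Icc 1 s, t ≠ (b i : ℂ)) ∧
      Φ t ≠ 1 ∧ (∀ i ∈ I, Φ t ≠ -(c i : ℂ)) ∧
      t - (κ : ℂ) * Φ t / (Φ t - 1)
          + ((κ : ℂ) / ((n : ℂ) * (1 - (γ : ℂ)))) * ∑ i ∈ I, Φ t / (Φ t + (c i : ℂ))
        = ((χ : ℂ) - (γ : ℂ) * (1 - (κ : ℂ))) / (1 - (γ : ℂ))} with hSdef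
  set U : Set ℂ := {z : ℂ | 0 < z.im} with hUdef
  -- Φ maps the upper half plane into the lower half plane
  have hImΦ : ∀ z : ℂ, 0 < z.im → (Φ z).im < 0 := fun z hz => by
    rw [hΦ]; exact im_phi_neg hz hs hab hba
  -- conjugation symmetry of Φ
  have hΦconj : ∀ z : ℂ, Φ ((starRingEnd ℂ) z) = (starRingEnd ℂ) (Φ z) := by
    intro z
    rw [hΦ, hΦ, map_prod]
    refine Finset.prod_congr rfl fun i _ => ?_
    rw [map_div₀, map_sub, map_sub, Complex.conj_ofReal, Complex.conj_ofReal]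
  set Ar : ℝ := (χ - γ * (1 - κ)) / (1 - γ) with hAr
  set β : ℝ := κ / (n * (1 - γ)) with hβ
  have hβpos : 0 < β := div_pos hκ0 (mul_pos (by exact_mod_cast hn) hγ')
  have hAc : ((Ar : ℝ) : ℂ) = ((χ:ℂ) - (γ:ℂ) * (1 - (κ:ℂ))) / (1 - (γ:ℂ)) := by
    rw [hAr]; push_cast; ring
  have hβc : ((κ:ℂ) / ((n:ℂ) * (1 - (γ:ℂ)))) = ((β : ℝ) : ℂ) := by
    rw [hβ]; push_cast; ring
  set T : ℂ → ℂ := fun z => (Ar:ℂ) + (κ:ℂ) * Φ z / (Φ z - 1)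
      - (β:ℂ) * ∑ i ∈ I, Φ z / (Φ z + (c i : ℂ)) with hT
  -- denominators do not vanish on U
  have hd1 : ∀ z ∈ U, Φ z - 1 ≠ 0 := by
    intro z hz h
    have h2 := hImΦ z hz
    have := congrArg Complex.im h
    simp only [Complex.sub_im, Complex.one_im, Complex.zero_im, sub_zero] at this
    linarith
  have hd2 : ∀ z ∈ U, ∀ r : ℝ, Φ z + (r:ℂ) ≠ 0 := by
    intro z hz r h
    have h2 := hImΦ z hz
    have := congrArg Complex.im h
    simp only [Complex.add_im, Complex.ofReal_im, Complex.zero_im, add_zero] at this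
    linarith
  -- differentiability
  have hdΦ : DifferentiableOn ℂ Φ U := by
    have hfun : Φ = fun t => ∏ i ∈ Finset.Icc 1 s, (t - (a i:ℂ)) / (t - (b i:ℂ)) := funext hΦ
    rw [hfun]
    refine DifferentiableOn.fun_finsetProd fun i _ => DifferentiableOn.div
      ((differentiable_id.sub_const _).differentiableOn)
      ((differentiable_id.sub_const _).differentiableOn) ?_
    intro z hz h
    have h3 : (z - ((b i : ℝ) : ℂ)).im = z.im := by simp
    rw [h] at h3
    have hz' : 0 < z.im := hz
    simp only [Complex.zero_im] at h3
    linarith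
  have hdT : DifferentiableOn ℂ T U := by
    refine DifferentiableOn.sub (DifferentiableOn.add (differentiableOn_const _) ?_) ?_
    · exact (hdΦ.const_mul _).div (hdΦ.sub (differentiableOn_const 1)) hd1
    · refine DifferentiableOn.const_mul ?_ _
      refine DifferentiableOn.fun_sum fun i _ => ?_
      exact hdΦ.div (hdΦ.add_const _) fun z hz => hd2 z hz (c i)
  -- T maps U to U
  have hmT : Set.MapsTo T U U := by
    intro z hz
    have hzim : 0 < z.im := hz
    have hΦim : (Φ z).im < 0 := hImΦ z hz
    show 0 < (T z).im
    rw [hT]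
    simp only []
    have hn1 : 0 < Complex.normSq (Φ z - 1) := Complex.normSq_pos.mpr (hd1 z hz)
    have e1 : ((κ:ℂ) * Φ z / (Φ z - 1)).im = κ * (-(Φ z).im) / Complex.normSq (Φ z - 1) := by
      rw [Complex.div_im, Complex.im_ofReal_mul, Complex.re_ofReal_mul, Complex.sub_re,
        Complex.sub_im, Complex.one_re, Complex.one_im]
      ring
    have e2 : ∀ i ∈ I, (Φ z / (Φ z + (c i:ℂ))).im
        = c i * (Φ z).im / Complex.normSq (Φ z + (c i:ℂ)) := by
      intro i hi
      rw [Complex.div_im, Complex.add_re, Complex.add_im, Complex.ofReal_re,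
        Complex.ofReal_im]
      ring
    rw [Complex.sub_im, Complex.add_im, Complex.ofReal_im, Complex.im_ofReal_mul,
      Complex.im_sum]
    have h1 : 0 < ((κ:ℂ) * Φ z / (Φ z - 1)).im := by
      rw [e1]
      exact div_pos (mul_pos hκ0 (by linarith)) hn1
    have hsum_le : ∑ i ∈ I, (Φ z / (Φ z + (c i:ℂ))).im ≤ 0 := by
      refine Finset.sum_nonpos fun i hi => ?_
      rw [e2 i hi]
      apply div_nonpos_of_nonpos_of_nonneg
      · exact (mul_neg_of_pos_of_neg (hc i hi) hΦim).le
      · exact Complex.normSq_nonneg _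
    have h2 : β * ∑ i ∈ I, (Φ z / (Φ z + (c i:ℂ))).im ≤ 0 :=
      mul_nonpos_of_nonneg_of_nonpos hβpos.le hsum_le
    linarith
  -- points of S in the upper half plane are fixed points of T
  have hfix : ∀ t, t ∈ S → T t = t := by
    intro t ht
    obtain ⟨him, hb, h1, hci, heq⟩ := ht
    rw [hT]
    simp only []
    rw [hAc, ← hβc]
    linear_combination -heq
  -- at most one solution in the upper half plane
  have hUup : ∀ t₁ t₂, t₁ ∈ S → t₂ ∈ S → 0 < t₁.im → 0 < t₂.im → t₁ = t₂ := by
    intro t₁ t₂ ht₁ ht₂ him1 him2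
    by_contra hne
    have hid := eq_id_of_two_fixed_points hdT hmT him1 him2 (hfix _ ht₁) (hfix _ ht₂) hne
    -- limit argument along the imaginary axis
    have hF1 : Tendsto (fun y : ℝ => Φ (Complex.I * y)) atTop (𝓝 1) := by
      have h := tendsto_finset_prod (f := fun i (y:ℝ) =>
          (Complex.I * y - (a i:ℂ)) / (Complex.I * y - (b i:ℂ)))
        (a := fun _ => (1:ℂ)) (Finset.Icc 1 s) (fun i _ => tendsto_ratio (a i) (b i))
      rw [Finset.prod_const_one] at h
      exact h.congr fun y => (hΦ _).symm
    have hF2 : Tendsto (fun y : ℝ => (Complex.I * y) * (Φ (Complex.I * y) - 1)) atTop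
        (𝓝 1) := by
      have h := tendsto_mul_prod_sub (Finset.Icc 1 s)
        (fun i y => (Complex.I * y - (a i : ℂ)) / (Complex.I * y - (b i : ℂ)))
        (fun i => (b i : ℂ) - (a i : ℂ))
        (fun i _ => tendsto_ratio _ _) (fun i _ => tendsto_mul_sub_ratio _ _)
      have hsc : (∑ i ∈ Finset.Icc 1 s, ((b i:ℂ) - (a i:ℂ))) = 1 := by
        have : (∑ i ∈ Finset.Icc 1 s, ((b i:ℂ) - (a i:ℂ)))
            = ((∑ i ∈ Finset.Icc 1 s, (b i - a i) : ℝ) : ℂ) := by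
          rw [Complex.ofReal_sum]
          push_cast
          rfl
        rw [this, hsum, Complex.ofReal_one]
      rw [hsc] at h
      exact h.congr fun y => by rw [hΦ]
    have hSlim : Tendsto (fun y : ℝ => ∑ i ∈ I, Φ (Complex.I * y) / (Φ (Complex.I * y)
        + (c i : ℂ))) atTop (𝓝 (∑ i ∈ I, 1 / (1 + (c i : ℂ)))) := by
      refine tendsto_finset_sum I fun i hi => ?_
      have hden : (1:ℂ) + (c i : ℂ) ≠ 0 := by
        intro h
        have := congrArg Complex.re h
        simp only [Complex.add_re, Complex.one_re, Complex.ofReal_re, Complex.zero_re] at this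
        linarith [hc i hi]
      exact hF1.div (hF1.add_const _) hden
    have hkey : ∀ᶠ y : ℝ in atTop, (κ:ℂ) =
        (Complex.I * y) * (Φ (Complex.I * y) - 1)
        + (Φ (Complex.I * y) - 1) * (-(Ar:ℂ) - (κ:ℂ)
          + (β:ℂ) * ∑ i ∈ I, Φ (Complex.I * y) / (Φ (Complex.I * y) + (c i : ℂ))) := by
      filter_upwards [eventually_gt_atTop (0:ℝ)] with y hy
      have hyU : (Complex.I * (y:ℂ)) ∈ U := by
        show 0 < (Complex.I * (y:ℂ)).im
        simpa using hy
      have hTy := hid (Complex.I * (y:ℝ)) (by simpa using hy)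
      rw [hT] at hTy
      simp only [] at hTy
      have hne1 : Φ (Complex.I * (y:ℝ)) - 1 ≠ 0 := hd1 _ hyU
      have h2 : (κ:ℂ) * Φ (Complex.I * (y:ℝ)) / (Φ (Complex.I * (y:ℝ)) - 1)
          = Complex.I * (y:ℝ) - (Ar:ℂ)
            + (β:ℂ) * ∑ i ∈ I, Φ (Complex.I * (y:ℝ)) / (Φ (Complex.I * (y:ℝ)) + (c i:ℂ)) := by
        linear_combination hTy
      rw [div_eq_iff hne1] at h2
      linear_combination h2
    have hRHS : Tendsto (fun y : ℝ =>
        (Complex.I * y) * (Φ (Complex.I * y) - 1)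
        + (Φ (Complex.I * y) - 1) * (-(Ar:ℂ) - (κ:ℂ)
          + (β:ℂ) * ∑ i ∈ I, Φ (Complex.I * y) / (Φ (Complex.I * y) + (c i : ℂ))))
        atTop (𝓝 (1 + 0 * (-(Ar:ℂ) - (κ:ℂ) + (β:ℂ) * ∑ i ∈ I, 1 / (1 + (c i : ℂ))))) := by
      refine hF2.add (Tendsto.mul ?_ ?_)
      · have := hF1.sub_const 1
        simpa using this
      · exact (tendsto_const_nhds.sub tendsto_const_nhds).add (tendsto_const_nhds.mul hSlim)
    have hconst : Tendsto (fun _ : ℝ => (κ:ℂ)) atTop (𝓝 ((κ:ℂ))) := tendsto_const_nhds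
    have hkc : (κ:ℂ) = 1 + 0 * (-(Ar:ℂ) - (κ:ℂ) + (β:ℂ) * ∑ i ∈ I, 1 / (1 + (c i : ℂ))) :=
      tendsto_nhds_unique (hconst.congr' hkey) hRHS
    rw [zero_mul, add_zero] at hkc
    have : κ = 1 := by exact_mod_cast hkc
    linarith
  -- conjugation sends solutions in the lower half plane to solutions in the upper one
  have hconj : ∀ t, t ∈ S → ((starRingEnd ℂ) t) ∈ S := by
    intro t ht
    obtain ⟨him, hb, h1, hci, heq⟩ := ht
    refine ⟨by simpa using him, ?_, ?_, ?_, ?_⟩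
    · intro i hi h
      apply hb i hi
      have := congrArg (starRingEnd ℂ) h
      rwa [Complex.conj_conj, Complex.conj_ofReal] at this
    · rw [hΦconj]
      intro h
      apply h1
      have := congrArg (starRingEnd ℂ) h
      rwa [Complex.conj_conj, map_one] at this
    · intro i hi
      rw [hΦconj]
      intro h
      apply hci i hi
      have := congrArg (starRingEnd ℂ) h
      rwa [Complex.conj_conj, map_neg, Complex.conj_ofReal] at this
    · have h2 := congrArg (starRingEnd ℂ) heq
      simp only [map_add, map_sub, map_mul, map_div₀, map_sum, map_one, map_natCast,
        Complex.conj_ofReal] at h2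
      rw [← hΦconj] at h2
      exact h2
  -- counting
  set P : Set ℂ := {t : ℂ | t ∈ S ∧ 0 < t.im} with hPdef
  set N : Set ℂ := {t : ℂ | t ∈ S ∧ t.im < 0} with hNdef
  have hPcard : P.encard ≤ 1 := by
    rw [Set.encard_le_one_iff]
    intro t₁ t₂ h1 h2
    exact hUup t₁ t₂ h1.1 h2.1 h1.2 h2.2
  have hNcard : N.encard ≤ 1 := by
    rw [Set.encard_le_one_iff]
    intro t₁ t₂ h1 h2
    have e1 : ((starRingEnd ℂ) t₁) ∈ P := ⟨hconj t₁ h1.1, by simpa using h1.2⟩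
    have e2 : ((starRingEnd ℂ) t₂) ∈ P := ⟨hconj t₂ h2.1, by simpa using h2.2⟩
    have := hUup _ _ e1.1 e2.1 e1.2 e2.2
    exact star_injective this
  have hsub : S ⊆ P ∪ N := by
    intro t ht
    rcases lt_trichotomy t.im 0 with h | h | h
    · exact Or.inr ⟨ht, h⟩
    · exact absurd h ht.1
    · exact Or.inl ⟨ht, h⟩
  calc S.encard ≤ (P ∪ N).encard := Set.encard_mono hsub
    _ ≤ P.encard + N.encard := Set.encard_union_le P N
    _ ≤ 1 + 1 := add_le_add hPcard hNcard
    _ = 2 := by norm_num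
end

section
/- Let n be a positive integer, γ ∈ [0,1) with γ ≠ 1, and let s be a positive integer with reals 0 = α̃_1 < b̃_1 < α̃_2 < b̃_2 < … < α̃_s < b̃_s. Let I be a finite index set with |I| ≤ n and c_i > 0 for i ∈ I. For real t with t ∉ {b̃_1,…,b̃_s}, define Φ_s(t) = Π_{i=1}^{s} (t − α̃_i)/(t − b̃_i) and J(t) = Φ_s(t) · [ 1/(Φ_s(t) − 1) − (1/(n(1−γ))) Σ_{i∈I} 1/(Φ_s(t) + c_i) ]. Let t_0 be a real number with t_0 ∉ {b̃_1,…,b̃_s}, Φ_s(t_0) ≠ 1, Φ_s(t_0) ≠ −c_i for all i ∈ I, and J'(t_0) ≠ 0. Then for real numbers κ ∈ (0,1) and χ, the function H(t) = t − κ·J(t) − (χ − γ(1−κ))/(1−γ) satisfies H(t_0) = 0 and H'(t_0) = 0 if and only if κ = 1/J'(t_0) and χ = (t_0 − J(t_0)/J'(t_0))·(1−γ) + γ·(1 − 1/J'(t_0)). -/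
open Finset

/-- Theorem 3.8 of the paper (parametrization of the frozen boundary): with
`Φ_s(t) = ∏_{i=1}^s (t−α̃_i)/(t−b̃_i)` and
`J(t) = Φ_s(t)·[1/(Φ_s(t)−1) − (1/(n(1−γ)))·Σ_{i∈I} 1/(Φ_s(t)+c_i)]`,
for a point `t₀` which is not a pole of `J` and with `J'(t₀) ≠ 0`, the function
`H(t) = t − κJ(t) − (χ − γ(1−κ))/(1−γ)` has a double root at `t₀`
(`H(t₀) = 0 ∧ H'(t₀) = 0`) if and only if
`κ = 1/J'(t₀)` and `χ = (t₀ − J(t₀)/J'(t₀))(1−γ) + γ(1 − 1/J'(t₀))`. -/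
theorem frozen_boundary_parametrization
    (n : ℕ) (hn : 0 < n) (γ : ℝ) (hγ0 : 0 ≤ γ) (hγ1 : γ < 1)
    (s : ℕ) (hs : 0 < s) (a b : ℕ → ℝ)
    (ha1 : a 1 = 0)
    (hab : ∀ i, 1 ≤ i → i ≤ s → a i < b i)
    (hba : ∀ i, 1 ≤ i → i < s → b i < a (i + 1))
    (I : Finset ℕ) (hI : I.card ≤ n)
    (c : ℕ → ℝ) (hc : ∀ i ∈ I, 0 < c i)
    (Φ : ℝ → ℝ)
    (hΦ : ∀ t, Φ t = ∏ i ∈ Finset.Icc 1 s, (t - a i) / (t - b i))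
    (J : ℝ → ℝ)
    (hJ : ∀ t, J t = Φ t * (1 / (Φ t - 1)
        - (1 / ((n : ℝ) * (1 - γ))) * ∑ i ∈ I, 1 / (Φ t + c i)))
    (t0 : ℝ)
    (ht0b : ∀ i ∈ Finset.Icc 1 s, t0 ≠ b i)
    (ht01 : Φ t0 ≠ 1)
    (ht0c : ∀ i ∈ I, Φ t0 ≠ -c i)
    (hJ' : deriv J t0 ≠ 0)
    (κ χ : ℝ) (hκ : κ ∈ Set.Ioo (0 : ℝ) 1)
    (H : ℝ → ℝ)
    (hH : ∀ t, H t = t - κ * J t - (χ - γ * (1 - κ)) / (1 - γ)) :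
    (H t0 = 0 ∧ deriv H t0 = 0) ↔
      (κ = 1 / deriv J t0 ∧
        χ = (t0 - J t0 / deriv J t0) * (1 - γ) + γ * (1 - 1 / deriv J t0)) := by

  have h1γ : (1:ℝ) - γ ≠ 0 := by linarith
  have hΦdiff : DifferentiableAt ℝ Φ t0 := by
    have : Φ = fun t => ∏ i ∈ Finset.Icc 1 s, (t - a i) / (t - b i) := funext hΦ
    rw [this]
    apply DifferentiableAt.fun_finsetProd
    intro i hi
    exact ((differentiableAt_id.sub_const _)).div (differentiableAt_id.sub_const _)
      (sub_ne_zero.mpr (ht0b i hi))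
  have hJdiff : DifferentiableAt ℝ J t0 := by
    have : J = fun t => Φ t * (1 / (Φ t - 1)
        - (1 / ((n : ℝ) * (1 - γ))) * ∑ i ∈ I, 1 / (Φ t + c i)) := funext hJ
    rw [this]
    refine hΦdiff.mul (DifferentiableAt.sub ?_ (DifferentiableAt.const_mul ?_ _))
    · exact (differentiableAt_const _).div (hΦdiff.sub_const _) (sub_ne_zero.mpr ht01)
    · apply DifferentiableAt.fun_sum
      intro i hi
      refine (differentiableAt_const _).div (hΦdiff.add_const _) ?_
      intro h
      exact ht0c i hi (by linarith)
  have hHd : deriv H t0 = 1 - κ * deriv J t0 := by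
    have hf : H = fun t => t - κ * J t - (χ - γ * (1 - κ)) / (1 - γ) := funext hH
    rw [hf]
    rw [deriv_fun_sub (differentiableAt_fun_id.fun_sub (hJdiff.const_mul κ)) (differentiableAt_const _)]
    rw [deriv_fun_sub differentiableAt_fun_id (hJdiff.const_mul κ), deriv_const_mul _ hJdiff]
    simp
  constructor
  · rintro ⟨h0, hd⟩
    rw [hHd] at hd
    have hκ1 : κ * deriv J t0 = 1 := by linarith
    have hκeq : κ = 1 / deriv J t0 := by
      field_simp
      linarith
    refine ⟨hκeq, ?_⟩
    rw [hH t0] at h0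
    have hχ : χ = (t0 - κ * J t0) * (1 - γ) + γ * (1 - κ) := by
      field_simp at h0
      linarith
    rw [hχ, hκeq]
    field_simp
  · rintro ⟨hκeq, hχeq⟩
    constructor
    · rw [hH t0, hκeq, hχeq]
      field_simp
      ring
    · rw [hHd, hκeq]
      field_simp
      ring
end
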